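/- arXiv:2510.00303 — 3 statements merged into one kernel-verified Lean document; each statement's English description precedes it below -/
import Mathlib

section
/- The Log-Determinant function f(A) = log det(S_A), where S is a symmetric positive definite matrix indexed by the finite ground set V and S_A is its principal submatrix indexed by A (with f(∅) = 0), is submodular: f(A) + f(B) ≥ f(A ∪ B) + f(A ∩ B) for all A, B ⊆ V. -/
set_option linter.unusedSectionVars false
set_option maxHeartbeats 1000000

open Finset Matrix

/-- The principal submatrix of `S` indexed by a finset `A`. -/
def principalSub {V : Type*} (S : Matrix V V ℝ) (A : Finset V) :
    Matrix {x // x ∈ A} {x // x ∈ A} ℝ :=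
  S.submatrix (fun i => (i : V)) (fun j => (j : V))

namespace LogDetAux

section general

variable {n m : Type*} [Fintype n] [Fintype m] [DecidableEq n] [DecidableEq m]

lemma extend_dot (e : m → n) (he : Function.Injective e) (x : m → ℝ) (g : n → ℝ) :
    Function.extend e x 0 ⬝ᵥ g = ∑ i, x i * g (e i) := by
  rw [dotProduct]
  have h1 : ∑ v : n, Function.extend e x 0 v * g v
      = ∑ v ∈ Finset.univ.image e, Function.extend e x 0 v * g v := by
    refine (Finset.sum_subset (Finset.subset_univ _) ?_).symm
    intro v _ hv
    have : ¬ ∃ i, e i = v := by simpa [Finset.mem_image] using hv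
    rw [Function.extend_apply' _ _ _ this, Pi.zero_apply, zero_mul]
  rw [h1, Finset.sum_image (fun a _ b _ h => he h)]
  simp [he.extend_apply]

lemma dot_extend (e : m → n) (he : Function.Injective e) (x : m → ℝ) (g : n → ℝ) :
    g ⬝ᵥ Function.extend e x 0 = ∑ i, g (e i) * x i := by
  have := extend_dot e he x g
  rw [dotProduct_comm] at this
  simpa [mul_comm] using this

lemma posDef_submatrix_of_injective {M : Matrix n n ℝ} (hM : M.PosDef) {e : m → n}
    (he : Function.Injective e) : (M.submatrix e e).PosDef := by
  refine Matrix.PosDef.of_dotProduct_mulVec_pos ?_ ?_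
  · have := hM.isHermitian
    unfold Matrix.IsHermitian at *
    rw [conjTranspose_submatrix, this]
  · intro x hx
    set y : n → ℝ := Function.extend e x 0 with hy
    have hyne : y ≠ 0 := by
      obtain ⟨i, hi⟩ := Function.ne_iff.mp hx
      refine Function.ne_iff.mpr ⟨e i, ?_⟩
      simpa [hy, he.extend_apply] using hi
    have key : star x ⬝ᵥ (M.submatrix e e) *ᵥ x = star y ⬝ᵥ M *ᵥ y := by
      simp only [star_trivial]
      rw [hy, extend_dot e he x (M *ᵥ Function.extend e x 0)]
      rw [dotProduct]
      refine Finset.sum_congr rfl fun i _ => ?_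
      congr 1
      rw [mulVec, mulVec, dot_extend e he x (fun v => M (e i) v)]
      rfl
    rw [key]
    exact hM.dotProduct_mulVec_pos hyne

lemma psd_det_nonneg {N : Matrix n n ℝ} (hN : N.PosSemidef) : 0 ≤ N.det := by
  rw [hN.isHermitian.det_eq_prod_eigenvalues]
  exact Finset.prod_nonneg fun i _ => hN.eigenvalues_nonneg i

lemma one_le_det_one_add {N : Matrix n n ℝ} (hN : N.PosSemidef) :
    1 ≤ (1 + N).det := by
  have hH := hN.isHermitian
  set U : Matrix n n ℝ := (hH.eigenvectorUnitary : Matrix n n ℝ)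
  have hU : U * star U = 1 := Matrix.mem_unitaryGroup_iff.mp hH.eigenvectorUnitary.2
  have hspec : N = U * Matrix.diagonal (RCLike.ofReal ∘ hH.eigenvalues) * star U :=
    hH.spectral_theorem
  have h1 : (1 : Matrix n n ℝ) + N
      = U * (1 + Matrix.diagonal (RCLike.ofReal ∘ hH.eigenvalues)) * star U := by
    refine Eq.symm ?_
    calc U * (1 + Matrix.diagonal (RCLike.ofReal ∘ hH.eigenvalues)) * star U
        = U * star U + U * Matrix.diagonal (RCLike.ofReal ∘ hH.eigenvalues) * star U := by
          rw [mul_add, mul_one, add_mul]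
    _ = 1 + N := by rw [hU, ← hspec]
  rw [h1, Matrix.det_mul_right_comm, hU, one_mul]
  have h2 : (1 : Matrix n n ℝ) + Matrix.diagonal (RCLike.ofReal ∘ hH.eigenvalues)
      = Matrix.diagonal (fun i => 1 + hH.eigenvalues i) := by
    rw [← Matrix.diagonal_one, Matrix.diagonal_add]
    rfl
  rw [h2, Matrix.det_diagonal]
  calc (1:ℝ) = ∏ _i : n, 1 := by simp
  _ ≤ ∏ i : n, (1 + hH.eigenvalues i) := by
      refine Finset.prod_le_prod (fun i _ => zero_le_one) fun i _ => ?_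
      have := hN.eigenvalues_nonneg i
      linarith

open scoped MatrixOrder in
lemma det_le_det_add {P N : Matrix n n ℝ} (hP : P.PosDef) (hN : N.PosSemidef) :
    P.det ≤ (P + N).det := by
  set R := CFC.sqrt P with hRdef
  have hR : R.PosSemidef := Matrix.nonneg_iff_posSemidef.mp (CFC.sqrt_nonneg P)
  have hRR : R * R = P := CFC.sqrt_mul_sqrt_self P hP.posSemidef.nonneg
  have hdetR : R.det ≠ 0 := by
    intro h
    have : P.det = 0 := by rw [← hRR, Matrix.det_mul, h, mul_zero]
    exact hP.det_pos.ne' this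
  have hUnit : IsUnit R.det := isUnit_iff_ne_zero.mpr hdetR
  have hRinv : R * R⁻¹ = 1 := Matrix.mul_nonsing_inv R hUnit
  have hRinv' : R⁻¹ * R = 1 := Matrix.nonsing_inv_mul R hUnit
  have hsplit : P + N = R * (1 + R⁻¹ * N * R⁻¹) * R := by
    rw [mul_add, mul_one, add_mul, hRR]
    congr 1
    calc N = (R * R⁻¹) * N * (R⁻¹ * R) := by rw [hRinv, hRinv', one_mul, mul_one]
    _ = R * (R⁻¹ * N * R⁻¹) * R := by simp only [mul_assoc]
  have hM' : (R⁻¹ * N * R⁻¹).PosSemidef := by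
    have h := hN.conjTranspose_mul_mul_same R⁻¹
    have : (R⁻¹)ᴴ = R⁻¹ := by
      rw [Matrix.conjTranspose_nonsing_inv, hR.isHermitian.eq]
    rwa [this] at h
  rw [hsplit, Matrix.det_mul, Matrix.det_mul]
  calc P.det = R.det * 1 * R.det := by
        rw [mul_one, ← Matrix.det_mul, hRR]
  _ ≤ R.det * (1 + R⁻¹ * N * R⁻¹).det * R.det := by
      have h1 := one_le_det_one_add hM'
      have h2 : 0 < R.det := by
        have : 0 ≤ R.det := psd_det_nonneg hR
        exact lt_of_le_of_ne this (Ne.symm hdetR)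
      exact mul_le_mul_of_nonneg_right (mul_le_mul_of_nonneg_left h1 h2.le) h2.le

open scoped MatrixOrder in
lemma posDef_of_posSemidef_det_ne_zero {M : Matrix n n ℝ} (hM : M.PosSemidef)
    (h : M.det ≠ 0) : M.PosDef := by
  set R := CFC.sqrt M with hRdef
  have hR : R.PosSemidef := Matrix.nonneg_iff_posSemidef.mp (CFC.sqrt_nonneg M)
  have hRR : R * R = M := CFC.sqrt_mul_sqrt_self M hM.nonneg
  have hdetR : R.det ≠ 0 := by
    intro hh
    exact h (by rw [← hRR, Matrix.det_mul, hh, mul_zero])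
  have hUnit : IsUnit R.det := isUnit_iff_ne_zero.mpr hdetR
  refine Matrix.PosDef.of_dotProduct_mulVec_pos hM.isHermitian fun x hx => ?_
  have hRx : R *ᵥ x ≠ 0 := by
    intro hh
    apply hx
    have : R⁻¹ *ᵥ (R *ᵥ x) = x := by
      rw [Matrix.mulVec_mulVec, Matrix.nonsing_inv_mul R hUnit, Matrix.one_mulVec]
    rw [← this, hh, Matrix.mulVec_zero]
  have hRsym : Rᵀ = R := by
    have := hR.isHermitian.eq
    simpa [Matrix.conjTranspose_eq_transpose_of_trivial] using this
  have key : star x ⬝ᵥ M *ᵥ x = (R *ᵥ x) ⬝ᵥ (R *ᵥ x) := by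
    simp only [star_trivial]
    rw [← hRR, ← Matrix.mulVec_mulVec, Matrix.dotProduct_mulVec, ← Matrix.mulVec_transpose,
      hRsym]
  rw [key]
  obtain ⟨i, hi⟩ := Function.ne_iff.mp hRx
  rw [dotProduct]
  refine Finset.sum_pos' (fun j _ => mul_self_nonneg _) ⟨i, Finset.mem_univ i, ?_⟩
  simpa [mul_self_pos] using hi

lemma fischer {p q : Type*} [Fintype p] [Fintype q] [DecidableEq p] [DecidableEq q]
    {M : Matrix (p ⊕ q) (p ⊕ q) ℝ} (hM : M.PosDef) :
    M.det ≤ (M.toBlocks₁₁).det * (M.toBlocks₂₂).det := by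
  set P := M.toBlocks₁₁ with hPd
  set Q := M.toBlocks₁₂ with hQd
  set T := M.toBlocks₂₂ with hTd
  have hR : M.toBlocks₂₁ = Qᴴ := by
    ext i j
    have := congrFun (congrFun hM.isHermitian.eq (Sum.inr i)) (Sum.inl j)
    simpa [Matrix.conjTranspose_apply, toBlocks₂₁, toBlocks₁₂, hQd] using this.symm
  have hMblocks : M = Matrix.fromBlocks P Q Qᴴ T := by
    rw [← hR, hPd, hQd, hTd, Matrix.fromBlocks_toBlocks]
  have hP : P.PosDef := posDef_submatrix_of_injective hM Sum.inl_injective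
  have hT : T.PosDef := posDef_submatrix_of_injective hM Sum.inr_injective
  haveI : Invertible P := hP.isUnit.invertible
  have hdet : M.det = P.det * (T - Qᴴ * P⁻¹ * Q).det := by
    rw [hMblocks, Matrix.det_fromBlocks₁₁, Matrix.invOf_eq_nonsing_inv]
  have hN : (Qᴴ * P⁻¹ * Q).PosSemidef := hP.inv.posSemidef.conjTranspose_mul_mul_same Q
  have hX : (T - Qᴴ * P⁻¹ * Q).PosSemidef := by
    have := (Matrix.PosDef.fromBlocks₁₁ Q T hP).mp (hMblocks ▸ hM.posSemidef)
    exact this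
  have hdetle : (T - Qᴴ * P⁻¹ * Q).det ≤ T.det := by
    by_cases hz : (T - Qᴴ * P⁻¹ * Q).det = 0
    · rw [hz]; exact (hT.det_pos).le
    · have hXpd : (T - Qᴴ * P⁻¹ * Q).PosDef := posDef_of_posSemidef_det_ne_zero hX hz
      have := det_le_det_add hXpd hN
      simpa [sub_add_cancel] using this
  rw [hdet]
  exact mul_le_mul_of_nonneg_left hdetle hP.det_pos.le

end general

variable {V : Type*} [DecidableEq V] [Fintype V]


noncomputable def schurC (S : Matrix V V ℝ) (C : Finset V) : Matrix V V ℝ :=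
  fun i j => S i j -
    (fun k : {x // x ∈ C} => S i k) ⬝ᵥ ((principalSub S C)⁻¹ *ᵥ fun k : {x // x ∈ C} => S k j)

def splitEquiv (C A : Finset V) (h : C ⊆ A) :
    {x // x ∈ C} ⊕ {x // x ∈ A \ C} ≃ {x // x ∈ A} where
  toFun := Sum.elim (fun i => ⟨i.1, h i.2⟩) (fun j => ⟨j.1, (Finset.mem_sdiff.mp j.2).1⟩)
  invFun a := if hc : a.1 ∈ C then Sum.inl ⟨a.1, hc⟩
    else Sum.inr ⟨a.1, Finset.mem_sdiff.mpr ⟨a.2, hc⟩⟩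
  left_inv := by
    rintro (i | j)
    · simp [i.2]
    · simp [(Finset.mem_sdiff.mp j.2).2]
  right_inv a := by
    by_cases hc : a.1 ∈ C <;> simp [hc]

def offQ (S : Matrix V V ℝ) (C A : Finset V) : Matrix {x // x ∈ C} {x // x ∈ A \ C} ℝ :=
  fun i j => S i.1 j.1

def offR (S : Matrix V V ℝ) (C A : Finset V) : Matrix {x // x ∈ A \ C} {x // x ∈ C} ℝ :=
  fun i j => S i.1 j.1

lemma submatrix_split (S : Matrix V V ℝ) (C A : Finset V) (h : C ⊆ A) :
    (principalSub S A).submatrix (splitEquiv C A h) (splitEquiv C A h) =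
      Matrix.fromBlocks (principalSub S C) (offQ S C A) (offR S C A)
        (principalSub S (A \ C)) := by
  ext (i | i) (j | j) <;> rfl

lemma offR_eq (S : Matrix V V ℝ) (hS : S.IsSymm) (C A : Finset V) :
    offR S C A = (offQ S C A)ᴴ := by
  ext i j
  simp only [offR, offQ, Matrix.conjTranspose_apply, star_trivial]
  exact congrFun (congrFun hS j.1) i.1

lemma schur_eq (S : Matrix V V ℝ) (C A : Finset V) :
    principalSub (schurC S C) (A \ C) =
      principalSub S (A \ C) - offR S C A * (principalSub S C)⁻¹ * offQ S C A := by
  ext i j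
  simp only [principalSub, schurC, Matrix.submatrix_apply, Matrix.sub_apply, Matrix.mul_apply,
    dotProduct, Matrix.mulVec, offR, offQ]
  congr 1
  simp_rw [Finset.mul_sum, Finset.sum_mul]
  rw [Finset.sum_comm]
  exact Finset.sum_congr rfl fun k _ => Finset.sum_congr rfl fun l _ => by ring

lemma principalSub_posDef {S : Matrix V V ℝ} (hSpd : S.PosDef) (A : Finset V) :
    (principalSub S A).PosDef :=
  posDef_submatrix_of_injective hSpd Subtype.val_injective

lemma det_split (S : Matrix V V ℝ) (hSpd : S.PosDef) {C A : Finset V} (h : C ⊆ A) :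
    (principalSub S A).det =
      (principalSub S C).det * (principalSub (schurC S C) (A \ C)).det := by
  have hC : (principalSub S C).PosDef := principalSub_posDef hSpd C
  haveI : Invertible (principalSub S C) := hC.isUnit.invertible
  rw [← Matrix.det_submatrix_equiv_self (splitEquiv C A h), submatrix_split S C A h,
    Matrix.det_fromBlocks₁₁, Matrix.invOf_eq_nonsing_inv, ← schur_eq]

lemma schur_posDef (S : Matrix V V ℝ) (hS : S.IsSymm) (hSpd : S.PosDef) {C A : Finset V}
    (h : C ⊆ A) : (principalSub (schurC S C) (A \ C)).PosDef := by
  have hC : (principalSub S C).PosDef := principalSub_posDef hSpd C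
  have hA : (principalSub S A).PosDef := principalSub_posDef hSpd A
  haveI : Invertible (principalSub S C) := hC.isUnit.invertible
  have hpsd : (principalSub (schurC S C) (A \ C)).PosSemidef := by
    rw [schur_eq, offR_eq S hS]
    refine (Matrix.PosDef.fromBlocks₁₁ (offQ S C A) (principalSub S (A \ C)) hC).mp ?_
    rw [← offR_eq S hS, ← submatrix_split S C A h]
    exact (posDef_submatrix_of_injective hA (splitEquiv C A h).injective).posSemidef
  refine posDef_of_posSemidef_det_ne_zero hpsd ?_
  intro hzero
  have := det_split S hSpd h
  rw [hzero, mul_zero] at this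
  exact hA.det_pos.ne' this

def unionEquiv (A B U : Finset V) (hA : A ⊆ U) (hB : B ⊆ U) (hU : ∀ x ∈ U, x ∈ A ∨ x ∈ B)
    (hd : ∀ x ∈ B, x ∉ A) : {x // x ∈ A} ⊕ {x // x ∈ B} ≃ {x // x ∈ U} where
  toFun := Sum.elim (fun i => ⟨i.1, hA i.2⟩) (fun j => ⟨j.1, hB j.2⟩)
  invFun u := if h : u.1 ∈ A then Sum.inl ⟨u.1, h⟩
    else Sum.inr ⟨u.1, (hU u.1 u.2).resolve_left h⟩
  left_inv := by
    rintro (i | j)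
    · simp [i.2]
    · simp [hd j.1 j.2]
  right_inv u := by
    by_cases h : u.1 ∈ A <;> simp [h]

end LogDetAux

open LogDetAux

/-- The Log-Determinant function `f(A) = log det(S_A)` of a symmetric positive
definite matrix `S` is submodular (`det` of the empty matrix is `1`, so `f ∅ = 0`). -/
theorem logdet_submodular {V : Type*} [DecidableEq V] [Fintype V]
    (S : Matrix V V ℝ) (hS : S.IsSymm) (hSpd : S.PosDef) :
    ∀ A B : Finset V,
      Real.log (principalSub S A).det + Real.log (principalSub S B).det ≥
      Real.log (principalSub S (A ∪ B)).det + Real.log (principalSub S (A ∩ B)).det := by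
  intro A B
  set C := A ∩ B with hC
  set U := A ∪ B with hU
  have hCA : C ⊆ A := Finset.inter_subset_left
  have hCB : C ⊆ B := Finset.inter_subset_right
  have hCU : C ⊆ U := hCA.trans Finset.subset_union_left
  -- the key determinant inequality
  have hAC : A \ C ⊆ U \ C := Finset.sdiff_subset_sdiff Finset.subset_union_left le_rfl
  have hBC : B \ C ⊆ U \ C := Finset.sdiff_subset_sdiff Finset.subset_union_right le_rfl
  have hcover : ∀ x ∈ U \ C, x ∈ A \ C ∨ x ∈ B \ C := by
    intro x hx
    rw [Finset.mem_sdiff] at hx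
    rcases Finset.mem_union.mp hx.1 with h | h
    · exact Or.inl (Finset.mem_sdiff.mpr ⟨h, hx.2⟩)
    · exact Or.inr (Finset.mem_sdiff.mpr ⟨h, hx.2⟩)
  have hdisj : ∀ x ∈ B \ C, x ∉ A \ C := by
    intro x hx hx'
    rw [Finset.mem_sdiff] at hx hx'
    exact hx.2 (Finset.mem_inter.mpr ⟨hx'.1, hx.1⟩)
  set e := unionEquiv (A \ C) (B \ C) (U \ C) hAC hBC hcover hdisj
  set T := schurC S C with hT
  have hTU : (principalSub T (U \ C)).PosDef := schur_posDef S hS hSpd hCU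
  have hM : ((principalSub T (U \ C)).submatrix e e).PosDef :=
    posDef_submatrix_of_injective hTU e.injective
  have hblock1 : ((principalSub T (U \ C)).submatrix e e).toBlocks₁₁
      = principalSub T (A \ C) := by
    ext i j; rfl
  have hblock2 : ((principalSub T (U \ C)).submatrix e e).toBlocks₂₂
      = principalSub T (B \ C) := by
    ext i j; rfl
  have hfischer : (principalSub T (U \ C)).det ≤
      (principalSub T (A \ C)).det * (principalSub T (B \ C)).det := by
    have := fischer hM
    rwa [hblock1, hblock2, Matrix.det_submatrix_equiv_self] at this
  -- determinant positivity
  have hdU := (principalSub_posDef hSpd U).det_pos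
  have hdA := (principalSub_posDef hSpd A).det_pos
  have hdB := (principalSub_posDef hSpd B).det_pos
  have hdC := (principalSub_posDef hSpd C).det_pos
  -- the determinant inequality
  have hdet : (principalSub S U).det * (principalSub S C).det ≤
      (principalSub S A).det * (principalSub S B).det := by
    rw [det_split S hSpd hCU, det_split S hSpd hCA, det_split S hSpd hCB]
    have h1 := (schur_posDef S hS hSpd hCA).det_pos
    have h2 := (schur_posDef S hS hSpd hCB).det_pos
    calc (principalSub S C).det * (principalSub T (U \ C)).det * (principalSub S C).det
        ≤ (principalSub S C).det * ((principalSub T (A \ C)).det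
            * (principalSub T (B \ C)).det) * (principalSub S C).det := by
          exact mul_le_mul_of_nonneg_right
            (mul_le_mul_of_nonneg_left hfischer hdC.le) hdC.le
    _ = (principalSub S C).det * (principalSub T (A \ C)).det
          * ((principalSub S C).det * (principalSub T (B \ C)).det) := by ring
  -- pass to logarithms
  have h1 : Real.log ((principalSub S U).det * (principalSub S C).det)
      ≤ Real.log ((principalSub S A).det * (principalSub S B).det) :=
    Real.log_le_log (by positivity) hdet
  rw [Real.log_mul hdU.ne' hdC.ne', Real.log_mul hdA.ne' hdB.ne'] at h1
  exact h1
end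

section
/- Let f : 2^V → ℝ≥0 be monotone submodular with f(∅) = 0, and let A* be an optimal solution to max{f(A) : |A| ≤ k}. The greedy algorithm, which starts from ∅ and at each of k steps adds the element with maximum marginal gain, outputs a set A_k with f(A_k) ≥ (1 − (1 − 1/k)^k) f(A*) ≥ (1 − e^{-1}) f(A*). -/
open Finset

lemma marginal_sum_aux {V : Type*} [DecidableEq V]
    (f : Finset V → ℝ)
    (hmono : ∀ A B : Finset V, A ⊆ B → f A ≤ f B)
    (hsub : ∀ A B : Finset V, f A + f B ≥ f (A ∪ B) + f (A ∩ B))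
    (A : Finset V) : ∀ S : Finset V,
    f (A ∪ S) ≤ f A + ∑ v ∈ S \ A, (f (insert v A) - f A) := by
  intro S
  induction S using Finset.induction_on with
  | empty => simp
  | @insert a S ha ih =>
    by_cases haA : a ∈ A
    · have h1 : A ∪ insert a S = A ∪ S := by
        ext x; simp; aesop
      have h2 : insert a S \ A = S \ A := by
        ext x; simp; aesop
      rw [h1, h2]; exact ih
    · have h2 : insert a S \ A = insert a (S \ A) := by
        ext x; simp; aesop
      have h3 : a ∉ S \ A := by simp [ha]
      rw [h2, Finset.sum_insert h3]
      have h4 : insert a A ∪ (A ∪ S) = A ∪ insert a S := by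
        ext x; simp
      have h5 : A ⊆ insert a A ∩ (A ∪ S) := by
        intro x hx; simp [hx]
      have hs := hsub (insert a A) (A ∪ S)
      rw [h4] at hs
      have h6 := hmono _ _ h5
      linarith

/-- Greedy maximization of a monotone, normalized, nonnegative submodular
function under a cardinality constraint achieves a
`1 − (1 − 1/k)^k ≥ 1 − e⁻¹` approximation guarantee. -/
theorem greedy_approximation {V : Type*} [DecidableEq V] [Fintype V]
    (f : Finset V → ℝ)
    (hnn : ∀ A : Finset V, 0 ≤ f A)
    (hmono : ∀ A B : Finset V, A ⊆ B → f A ≤ f B)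
    (hsub : ∀ A B : Finset V, f A + f B ≥ f (A ∪ B) + f (A ∩ B))
    (hempty : f ∅ = 0)
    (k : ℕ) (hk : 1 ≤ k)
    (Astar : Finset V) (hAcard : Astar.card ≤ k)
    (hAopt : ∀ B : Finset V, B.card ≤ k → f B ≤ f Astar)
    (A : ℕ → Finset V) (hA0 : A 0 = ∅)
    (hgreedy : ∀ j < k, ∃ v : V, v ∉ A j ∧ A (j + 1) = insert v (A j) ∧
      ∀ w : V, w ∉ A j → f (insert w (A j)) ≤ f (insert v (A j))) :
    f (A k) ≥ (1 - (1 - 1 / (k : ℝ)) ^ k) * f Astar ∧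
    (1 - (1 - 1 / (k : ℝ)) ^ k) * f Astar ≥ (1 - Real.exp (-1)) * f Astar := by
  have hk0 : (0:ℝ) < k := by exact_mod_cast hk
  have hfac : 0 ≤ 1 - 1/(k:ℝ) := by
    have : 1/(k:ℝ) ≤ 1 := by
      rw [div_le_one hk0]; exact_mod_cast hk
    linarith
  have key : ∀ j, j ≤ k → f Astar - f (A j) ≤ (1 - 1/(k:ℝ))^j * f Astar := by
    intro j
    induction j with
    | zero => intro _; simp [hA0, hempty]
    | succ j ih =>
      intro hj
      have hjk : j < k := hj
      obtain ⟨v, hv, hA1, hmax⟩ := hgreedy j hjk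
      set gain := f (A (j+1)) - f (A j) with hgain
      have hsum := marginal_sum_aux f hmono hsub (A j) Astar
      rw [Finset.union_comm] at hsum
      have hterm : ∀ w ∈ Astar \ A j, f (insert w (A j)) - f (A j) ≤ gain := by
        intro w hw
        rw [Finset.mem_sdiff] at hw
        have := hmax w hw.2
        rw [hgain, hA1]; linarith
      have hsum2 : ∑ w ∈ Astar \ A j, (f (insert w (A j)) - f (A j))
          ≤ ((Astar \ A j).card : ℝ) * gain := by
        calc ∑ w ∈ Astar \ A j, (f (insert w (A j)) - f (A j))
            ≤ ∑ _w ∈ Astar \ A j, gain := Finset.sum_le_sum hterm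
          _ = ((Astar \ A j).card : ℝ) * gain := by
              rw [Finset.sum_const, nsmul_eq_mul]
      have hcard : ((Astar \ A j).card : ℝ) ≤ (k : ℝ) := by
        have h := Finset.card_le_card (Finset.sdiff_subset (s := Astar) (t := A j))
        exact_mod_cast le_trans h hAcard
      have hgain0 : 0 ≤ gain := by
        have := hmono (A j) (insert v (A j)) (Finset.subset_insert _ _)
        rw [hgain, hA1]; linarith
      have h1 : f Astar ≤ f (A j) + (k:ℝ) * gain := by
        have hmonoU : f Astar ≤ f (Astar ∪ A j) := hmono _ _ Finset.subset_union_left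
        have hmul : ((Astar \ A j).card : ℝ) * gain ≤ (k:ℝ) * gain :=
          mul_le_mul_of_nonneg_right hcard hgain0
        linarith
      have h2 : (f Astar - f (A j)) / (k:ℝ) ≤ gain := by
        rw [div_le_iff₀ hk0]
        nlinarith
      have step : f Astar - f (A (j+1)) ≤ (1 - 1/(k:ℝ)) * (f Astar - f (A j)) := by
        have heq : (1 - 1/(k:ℝ)) * (f Astar - f (A j))
            = (f Astar - f (A j)) - (f Astar - f (A j)) / (k:ℝ) := by
          field_simp
        rw [heq]
        have : f (A (j+1)) = f (A j) + gain := by rw [hgain]; ring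
        linarith
      calc f Astar - f (A (j+1)) ≤ (1 - 1/(k:ℝ)) * (f Astar - f (A j)) := step
        _ ≤ (1 - 1/(k:ℝ)) * ((1 - 1/(k:ℝ))^j * f Astar) :=
            mul_le_mul_of_nonneg_left (ih (le_of_lt hjk)) hfac
        _ = (1 - 1/(k:ℝ))^(j+1) * f Astar := by ring
  have hpow : (1 - 1/(k:ℝ))^k ≤ Real.exp (-1) := by
    have h1 : (1 - 1/(k:ℝ)) ≤ Real.exp (-(1/(k:ℝ))) := by
      have := Real.add_one_le_exp (-(1/(k:ℝ)))
      linarith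
    have h2 : (1 - 1/(k:ℝ))^k ≤ (Real.exp (-(1/(k:ℝ))))^k :=
      pow_le_pow_left₀ hfac h1 k
    have h3 : (Real.exp (-(1/(k:ℝ))))^k = Real.exp ((k:ℝ) * (-(1/(k:ℝ)))) :=
      (Real.exp_nat_mul _ k).symm
    have h4 : (k:ℝ) * (-(1/(k:ℝ))) = -1 := by
      field_simp
    rw [h3, h4] at h2
    exact h2
  constructor
  · have h := key k le_rfl
    nlinarith
  · have := hnn Astar
    nlinarith
end

section
/- Under the hypotheses of the greedy analysis (f monotone submodular, f(∅)=0, A* optimal with |A*| ≤ k), each greedy step satisfies f(A_{j+1}) − f(A_j) ≥ (f(A*) − f(A_j)) / k. -/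
open Finset

lemma marginal_sum {V : Type*} [DecidableEq V]
    (f : Finset V → ℝ)
    (hmono : ∀ A B : Finset V, A ⊆ B → f A ≤ f B)
    (hsub : ∀ A B : Finset V, f A + f B ≥ f (A ∪ B) + f (A ∩ B))
    (Aj : Finset V) (S : Finset V) :
    f (Aj ∪ S) - f Aj ≤ ∑ w ∈ S, (f (insert w Aj) - f Aj) := by
  induction S using Finset.induction_on with
  | empty => simp
  | @insert w S hw ih =>
    rw [Finset.sum_insert hw]
    have h1 := hsub (insert w Aj) (Aj ∪ S)
    have h2 : Aj ⊆ (insert w Aj) ∩ (Aj ∪ S) := by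
      intro x hx; simp [hx]
    have h3 := hmono _ _ h2
    have h4 : (insert w Aj) ∪ (Aj ∪ S) = Aj ∪ insert w S := by
      ext x; simp only [Finset.mem_union, Finset.mem_insert]; tauto
    rw [h4] at h1
    linarith

/-- Each greedy step gains at least a `1/k` fraction of the remaining gap to
the optimum: `f(A_{j+1}) − f(A_j) ≥ (f(A*) − f(A_j)) / k`. -/
theorem greedy_step_gain {V : Type*} [DecidableEq V] [Fintype V]
    (f : Finset V → ℝ)
    (hmono : ∀ A B : Finset V, A ⊆ B → f A ≤ f B)
    (hsub : ∀ A B : Finset V, f A + f B ≥ f (A ∪ B) + f (A ∩ B))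
    (hempty : f ∅ = 0)
    (k : ℕ) (hk : 1 ≤ k)
    (Astar : Finset V) (hAcard : Astar.card ≤ k)
    (hAopt : ∀ B : Finset V, B.card ≤ k → f B ≤ f Astar)
    (Aj : Finset V) (v : V) (hv : v ∉ Aj)
    (hargmax : ∀ w : V, w ∉ Aj → f (insert w Aj) ≤ f (insert v Aj)) :
    f (insert v Aj) - f Aj ≥ (f Astar - f Aj) / (k : ℝ) := by
  set S := Astar \ Aj with hS
  set g := f (insert v Aj) - f Aj with hg
  have hgain : 0 ≤ g := by
    have := hmono Aj (insert v Aj) (Finset.subset_insert _ _)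
    simpa [hg] using sub_nonneg.mpr this
  have hsum := marginal_sum f hmono hsub Aj S
  have hbound : ∑ w ∈ S, (f (insert w Aj) - f Aj) ≤ S.card • g := by
    apply Finset.sum_le_card_nsmul
    intro w hw
    have hwn : w ∉ Aj := (Finset.mem_sdiff.mp hw).2
    have := hargmax w hwn
    simp only [hg]
    linarith
  have hSk : (S.card : ℝ) ≤ (k : ℝ) := by
    have h1 : S.card ≤ Astar.card := Finset.card_le_card (Finset.sdiff_subset)
    exact_mod_cast le_trans h1 hAcard
  have hsub' : Astar ⊆ Aj ∪ S := by
    intro x hx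
    by_cases h : x ∈ Aj
    · exact Finset.mem_union_left _ h
    · exact Finset.mem_union_right _ (Finset.mem_sdiff.mpr ⟨hx, h⟩)
  have h5 := hmono _ _ hsub'
  have hkg : (S.card : ℝ) * g ≤ (k : ℝ) * g := mul_le_mul_of_nonneg_right hSk hgain
  have hkpos : (0 : ℝ) < k := by exact_mod_cast hk
  rw [ge_iff_le, div_le_iff₀ hkpos]
  simp only [nsmul_eq_mul] at hbound
  linarith
end
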